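/- For every integer a ≥ 1, the polynomial P_{4,a}(x) = (20a⁴−2)x⁴ + (16a⁵+4a)x³ + (16a⁶+4a²)x² + 8a³x + 1 is irreducible over the rationals. -/

import Mathlib

set_option maxHeartbeats 1600000
open Polynomial

-- positivity of Q to the right of B
lemma qpos_right (A m : ℝ) (hA : 1 ≤ A) (hm : -4*A^3 + 1/(2*A) ≤ m) :
    0 < m^4+8*A^3*m^3+(16*A^6+4*A^2)*m^2+(16*A^5+4*A)*m+(20*A^4-2) := by
  have hA0 : (0:ℝ) < A := by linarith
  obtain ⟨u, hu, rfl⟩ : ∃ u, 0 ≤ u ∧ m = -4*A^3+1/(2*A)+u :=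
    ⟨m - (-4*A^3+1/(2*A)), by linarith, by ring⟩
  have hAne : A ≠ 0 := ne_of_gt hA0
  have key : (-4*A^3+1/(2*A)+u)^4+8*A^3*(-4*A^3+1/(2*A)+u)^3
      +(16*A^6+4*A^2)*(-4*A^3+1/(2*A)+u)^2+(16*A^5+4*A)*(-4*A^3+1/(2*A)+u)+(20*A^4-2)
      = (u^2-(4*A^3-1/A)*u+1/(4*A^2))^2 + 4*A*u := by
    field_simp
    ring
  rw [key]
  rcases hu.eq_or_lt with h | h
  · rw [← h]
    have : ((0:ℝ)^2-(4*A^3-1/A)*0+1/(4*A^2))^2 + 4*A*0 = (1/(4*A^2))^2 := by ring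
    rw [this]
    positivity
  · nlinarith [sq_nonneg (u^2-(4*A^3-1/A)*u+1/(4*A^2)), mul_pos (by linarith : (0:ℝ) < 4*A) h]

lemma qpos_left (A m : ℝ) (hA : 1 ≤ A) (hA2 : A = 1 ∨ 2 ≤ A)
    (hm : m ≤ -4*A^3 + 1/(2*A) - 1/(4*A^5)) :
    0 < m^4+8*A^3*m^3+(16*A^6+4*A^2)*m^2+(16*A^5+4*A)*m+(20*A^4-2) := by
  have hA0 : (0:ℝ) < A := by linarith
  have hAne : A ≠ 0 := ne_of_gt hA0
  obtain ⟨s, hs, rfl⟩ : ∃ s, 1/(4*A^5) ≤ s ∧ m = -4*A^3+1/(2*A)-s :=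
    ⟨-4*A^3+1/(2*A) - m, by linarith, by ring⟩
  have key : (-4*A^3+1/(2*A)-s)^4+8*A^3*(-4*A^3+1/(2*A)-s)^3
      +(16*A^6+4*A^2)*(-4*A^3+1/(2*A)-s)^2+(16*A^5+4*A)*(-4*A^3+1/(2*A)-s)+(20*A^4-2)
      = (s^2+(4*A^3-1/A)*s+1/(4*A^2))^2 - 4*A*s := by
    field_simp
    ring
  rw [key]; clear key hm
  have hs0 : 0 < s := lt_of_lt_of_le (by positivity) hs
  rcases hA2 with rfl | hA2
  · -- A = 1, s ≥ 1/4 : (s^2+3s+1/4)^2 > 4s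
    have hs4 : 1/4 ≤ s := by linarith [hs]
    norm_num
    nlinarith [sq_nonneg s, sq_nonneg (s - 1/4), mul_nonneg (by linarith : (0:ℝ) ≤ s - 1/4) hs0.le]
  · -- A ≥ 2
    have h2 : 4 ≤ A^2 := by nlinarith
    have h4 : 4 ≤ A^4 := by nlinarith
    have e1 : A/4 ≤ A^6 * s := by
      have h := mul_le_mul_of_nonneg_left hs (by positivity : (0:ℝ) ≤ A^6)
      have : A^6 * (1/(4*A^5)) = A/4 := by field_simp
      linarith [this ▸ h]
    have e2 : 225/64*(A*s) ≤ 225/16*(A^6*s^2) := by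
      have h := mul_le_mul_of_nonneg_right e1 hs0.le
      nlinarith [h]
    have e3 : 0 < A * s := mul_pos hA0 hs0
    obtain ⟨L, hL⟩ : ∃ L', L' = s^2+(4*A^3-1/A)*s+1/(4*A^2) := ⟨_, rfl⟩
    rw [← hL]
    obtain ⟨M, hMdef⟩ : ∃ M', M' = 15/4*A^3*s + 1/(4*A^2) := ⟨_, rfl⟩
    have hM : M ≤ L := by
      rw [hL, hMdef]
      have hc : 1/A ≤ A^3/4 := by
        rw [div_le_div_iff₀ hA0 (by norm_num : (0:ℝ) < 4)]
        nlinarith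
      nlinarith [sq_nonneg s, mul_le_mul_of_nonneg_right hc hs0.le]
    have hM0 : (0:ℝ) < M := by rw [hMdef]; positivity
    have hsq : M^2 ≤ L^2 := by nlinarith [hM, hM0]
    have eM : M^2 = 225/16*(A^6*s^2) + 15/8*(A*s) + 1/(16*A^4) := by
      rw [hMdef]; field_simp; ring
    have hpos : (0:ℝ) < 1/(16*A^4) := by positivity
    linarith [hsq, eM, e2, e3, hpos]

lemma pneg (A : ℝ) (hA : 1 ≤ A) :
    (20*A^4-2)*(-16*A^5/(64*A^8-8*A^4+1))^4 + (16*A^5+4*A)*(-16*A^5/(64*A^8-8*A^4+1))^3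
      + (16*A^6+4*A^2)*(-16*A^5/(64*A^8-8*A^4+1))^2 + 8*A^3*(-16*A^5/(64*A^8-8*A^4+1)) + 1 < 0 := by
  have hA0 : (0:ℝ) < A := by linarith
  have h4 : 1 ≤ A^4 := one_le_pow₀ hA
  have hD : (0:ℝ) < 64*A^8-8*A^4+1 := by nlinarith
  have hDne : (64*A^8-8*A^4+1) ≠ 0 := ne_of_gt hD
  have key : ((20*A^4-2)*(-16*A^5/(64*A^8-8*A^4+1))^4 + (16*A^5+4*A)*(-16*A^5/(64*A^8-8*A^4+1))^3
      + (16*A^6+4*A^2)*(-16*A^5/(64*A^8-8*A^4+1))^2 + 8*A^3*(-16*A^5/(64*A^8-8*A^4+1)) + 1)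
      * (64*A^8-8*A^4+1)^4 = -4096*A^12+512*A^8-32*A^4+1 := by
    obtain ⟨x, hx⟩ : ∃ x : ℝ, x = -16*A^5/(64*A^8-8*A^4+1) := ⟨_, rfl⟩
    have hxD : x * (64*A^8-8*A^4+1) = -16*A^5 := by rw [hx]; exact div_mul_cancel₀ _ hDne
    rw [← hx]
    linear_combination ((20*A^4-2)*((x*(64*A^8-8*A^4+1))^3 + (x*(64*A^8-8*A^4+1))^2*(-16*A^5)
      + (x*(64*A^8-8*A^4+1))*(-16*A^5)^2 + (-16*A^5)^3)
      + (16*A^5+4*A)*(64*A^8-8*A^4+1)*((x*(64*A^8-8*A^4+1))^2 + (x*(64*A^8-8*A^4+1))*(-16*A^5) + (-16*A^5)^2)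
      + (16*A^6+4*A^2)*(64*A^8-8*A^4+1)^2*((x*(64*A^8-8*A^4+1)) + (-16*A^5))
      + 8*A^3*(64*A^8-8*A^4+1)^3) * hxD
  have hN : -4096*A^12+512*A^8-32*A^4+1 < 0 := by nlinarith [pow_le_pow_right₀ hA (by norm_num : (8:ℕ) ≤ 12), one_le_pow₀ hA (n := 8)]
  nlinarith [key, pow_pos hD 4]

lemma location (A w : ℝ) (hA : 1 ≤ A) (hA2 : A = 1 ∨ 2 ≤ A)
    (hw : (20*A^4-2)*w^4 + (16*A^5+4*A)*w^3 + (16*A^6+4*A^2)*w^2 + 8*A^3*w + 1 = 0) :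
    w ≠ 0 ∧ -4*A^3+1/(2*A)-1/(4*A^5) < 1/w ∧ 1/w < -4*A^3+1/(2*A) := by
  have hA0 : (0:ℝ) < A := by linarith
  have hw0 : w ≠ 0 := by
    rintro rfl
    norm_num at hw
  have key : ((1/w)^4+8*A^3*(1/w)^3+(16*A^6+4*A^2)*(1/w)^2+(16*A^5+4*A)*(1/w)+(20*A^4-2)) * w^4
      = (20*A^4-2)*w^4 + (16*A^5+4*A)*w^3 + (16*A^6+4*A^2)*w^2 + 8*A^3*w + 1 := by
    field_simp
    ring
  have hq : (1/w)^4+8*A^3*(1/w)^3+(16*A^6+4*A^2)*(1/w)^2+(16*A^5+4*A)*(1/w)+(20*A^4-2) = 0 := by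
    have hw4 : w^4 ≠ 0 := pow_ne_zero _ hw0
    have := key.trans hw
    exact (mul_eq_zero.mp this).resolve_right hw4
  refine ⟨hw0, ?_, ?_⟩
  · by_contra h
    push_neg at h
    have := qpos_left A (1/w) hA hA2 h
    linarith [hq ▸ this]
  · by_contra h
    push_neg at h
    have := qpos_right A (1/w) hA h
    linarith [hq ▸ this]

lemma noLinear (a b c : ℤ) (A : ℝ) (hA : 1 ≤ A) (hAa : A = (a:ℝ)) (hA2 : A = 1 ∨ 2 ≤ A)
    (hb : b ≠ 0) (hc : c = 1 ∨ c = -1)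
    (hw : (20*A^4-2)*(-(c:ℝ)/(b:ℝ))^4 + (16*A^5+4*A)*(-(c:ℝ)/(b:ℝ))^3
      + (16*A^6+4*A^2)*(-(c:ℝ)/(b:ℝ))^2 + 8*A^3*(-(c:ℝ)/(b:ℝ)) + 1 = 0) : False := by
  have hA0 : (0:ℝ) < A := by linarith
  have hbr : (b:ℝ) ≠ 0 := Int.cast_ne_zero.mpr hb
  obtain ⟨hw0, hl, hr⟩ := location A (-(c:ℝ)/(b:ℝ)) hA hA2 hw
  have hinv : 1/(-(c:ℝ)/(b:ℝ)) = ((-b*c : ℤ):ℝ) := by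
    rcases hc with rfl|rfl <;> push_cast <;> field_simp
  rw [hinv] at hl hr
  have h5 : (1:ℝ) ≤ A^5 := one_le_pow₀ hA
  have hsmall : 1/(2*A) - 1/(4*A^5) > 0 := by
    rw [gt_iff_lt, sub_pos, div_lt_div_iff₀ (by positivity) (by positivity)]
    nlinarith [le_self_pow₀ hA (by norm_num : (5:ℕ) ≠ 0), hA0]
  have hhalf : 1/(2*A) ≤ 1/2 := by
    rw [div_le_div_iff₀ (by linarith) (by norm_num)]; linarith
  -- z := -b*c + 4*a^3 is an integer in (0, 1/2)
  have hz1 : (0:ℝ) < ((-b*c + 4*a^3 : ℤ):ℝ) := by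
    push_cast
    rw [hAa] at hl hsmall
    push_cast at hl hsmall
    linarith
  have hz2 : ((-b*c + 4*a^3 : ℤ):ℝ) < 1 := by
    push_cast
    rw [hAa] at hr hhalf
    push_cast at hr hhalf
    linarith
  have h1 : (1:ℤ) ≤ -b*c + 4*a^3 := by exact_mod_cast hz1
  have : ((1:ℤ):ℝ) ≤ ((-b*c + 4*a^3 : ℤ):ℝ) := Int.cast_le.mpr h1
  push_cast at this
  push_cast at hz2
  linarith

lemma quadKill (α β : ℤ) (A : ℝ) (hA : 1 ≤ A) (hA2 : A = 1 ∨ 2 ≤ A)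
    (hα : α ≠ 0) (hbound : (α:ℝ)^2 ≤ (20*A^4-2)^2)
    (hneg : (α:ℝ)*(-16*A^5/(64*A^8-8*A^4+1))^2 + (β:ℝ)*(-16*A^5/(64*A^8-8*A^4+1)) + 1 < 0)
    (hroot : ∀ w : ℝ, (α:ℝ)*w^2+(β:ℝ)*w+1 = 0 →
      (20*A^4-2)*w^4 + (16*A^5+4*A)*w^3 + (16*A^6+4*A^2)*w^2 + 8*A^3*w + 1 = 0) : False := by
  have hA0 : (0:ℝ) < A := by linarith
  obtain ⟨w₀, hw₀⟩ : ∃ x:ℝ, x = -16*A^5/(64*A^8-8*A^4+1) := ⟨_, rfl⟩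
  rw [← hw₀] at hneg
  have hαr : (α:ℝ) ≠ 0 := Int.cast_ne_zero.mpr hα
  have hid : ∀ w:ℝ, 4*(α:ℝ)*((α:ℝ)*w^2+(β:ℝ)*w+1) = (2*α*w+β)^2 - ((β:ℝ)^2-4*α) := by
    intro w; ring
  have hdisc : 0 < β^2 - 4*α := by
    by_contra h
    push_neg at h
    have hdr : ((β:ℝ)^2-4*(α:ℝ)) ≤ 0 := by exact_mod_cast h
    have hα4 : (0:ℝ) < α := by
      have h0 : (0:ℝ) ≤ 4*α := by nlinarith [sq_nonneg ((β:ℝ))]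
      rcases h0.eq_or_lt with h'|h'
      · exact absurd h'.symm (by simpa using hαr)
      · linarith
    nlinarith [hid w₀, sq_nonneg (2*(α:ℝ)*w₀+β)]
  have hdisc1 : (1:ℝ) ≤ ((β:ℝ)^2-4*(α:ℝ)) := by
    have h1 : ((1:ℤ):ℝ) ≤ ((β^2 - 4*α : ℤ):ℝ) := Int.cast_le.mpr hdisc
    push_cast at h1; linarith
  obtain ⟨d, hd⟩ : ∃ x:ℝ, x = (β:ℝ)^2-4*(α:ℝ) := ⟨_, rfl⟩
  rw [← hd] at hdisc1
  have hd0 : (0:ℝ) < d := by linarith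
  obtain ⟨sd, hsd⟩ : ∃ x:ℝ, x = Real.sqrt d := ⟨_, rfl⟩
  have hsd2 : sd^2 = d := by rw [hsd]; exact Real.sq_sqrt hd0.le
  have hsd0 : 0 < sd := by rw [hsd]; exact Real.sqrt_pos.mpr hd0
  obtain ⟨u, hu⟩ : ∃ x:ℝ, x = (-β - sd)/(2*α) := ⟨_, rfl⟩
  obtain ⟨v, hv⟩ : ∃ x:ℝ, x = (-β + sd)/(2*α) := ⟨_, rfl⟩
  have hqu : (α:ℝ)*u^2+(β:ℝ)*u+1 = 0 := by
    have h2 : 2*(α:ℝ)*u + β = -sd := by rw [hu]; field_simp; try ring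
    have h3 : 4*(α:ℝ)*((α:ℝ)*u^2+(β:ℝ)*u+1) = 0 := by
      rw [hid u, h2, ← hd]; linear_combination hsd2
    rcases mul_eq_zero.mp h3 with h|h
    · exact absurd h (by positivity)
    · exact h
  have hqv : (α:ℝ)*v^2+(β:ℝ)*v+1 = 0 := by
    have h2 : 2*(α:ℝ)*v + β = sd := by rw [hv]; field_simp; try ring
    have h3 : 4*(α:ℝ)*((α:ℝ)*v^2+(β:ℝ)*v+1) = 0 := by
      rw [hid v, h2, ← hd]; linear_combination hsd2
    rcases mul_eq_zero.mp h3 with h|h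
    · exact absurd h (by positivity)
    · exact h
  have h1 : (α:ℝ)*(v-u) = sd := by rw [hu, hv]; field_simp; ring
  obtain ⟨hu0, hul, hur⟩ := location A u hA hA2 (hroot u hqu)
  obtain ⟨hv0, hvl, hvr⟩ := location A v hA hA2 (hroot v hqv)
  obtain ⟨mu, hmu⟩ : ∃ x:ℝ, x = 1/u := ⟨_, rfl⟩
  obtain ⟨mv, hmv⟩ : ∃ x:ℝ, x = 1/v := ⟨_, rfl⟩
  rw [← hmu] at hul hur
  rw [← hmv] at hvl hvr
  have hhalf : 1/(2*A) ≤ 1/2 := by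
    rw [div_le_div_iff₀ (by linarith) (by norm_num)]; linarith
  have hA3 : 1 ≤ A^3 := one_le_pow₀ hA
  have hmub : mu ≤ -3*A^3 := by nlinarith [hur, hhalf, hA3]
  have hmvb : mv ≤ -3*A^3 := by nlinarith [hvr, hhalf, hA3]
  have hprod : 9*A^6 ≤ mu*mv := by nlinarith [hmub, hmvb]
  have hq : (mv-mu)^2 ≤ 1/(16*A^10) := by
    have h1 : mv - mu < 1/(4*A^5) := by linarith [hvr, hul]
    have h2 : mu - mv < 1/(4*A^5) := by linarith [hur, hvl]
    have h3 : (mv-mu)^2 < (1/(4*A^5))^2 := by nlinarith [h1, h2, pow_pos hA0 5]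
    have h4 : (1/(4*A^5))^2 = 1/(16*A^10) := by field_simp; ring
    linarith [h4 ▸ h3]
  have hup : (u - v) * (mu * mv) = mv - mu := by
    rw [hmu, hmv]; field_simp; try ring_nf; try simp; try tauto
  have hd2 : d * (mu*mv)^2 = (α:ℝ)^2 * (mv-mu)^2 := by
    calc d * (mu*mv)^2 = sd^2 * (mu*mv)^2 := by rw [hsd2]
      _ = ((α:ℝ)*(v-u))^2 * (mu*mv)^2 := by rw [h1]
      _ = (α:ℝ)^2 * ((u-v)*(mu*mv))^2 := by ring
      _ = (α:ℝ)^2 * (mv-mu)^2 := by rw [hup]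
  have hb400 : (α:ℝ)^2 ≤ 400*A^8 := by nlinarith [one_le_pow₀ hA (n := 4), hbound]
  have hL : 81*A^12 ≤ d * (mu*mv)^2 := by
    have hp2 : (9*A^6)^2 ≤ (mu*mv)^2 := by nlinarith [hprod, pow_pos hA0 6]
    have hd1 : (0:ℝ) ≤ (d - 1) * (mu*mv)^2 :=
      mul_nonneg (by linarith) (sq_nonneg _)
    nlinarith [hp2, hd1]
  have hR : (α:ℝ)^2 * (mv-mu)^2 ≤ 400*A^8 * (1/(16*A^10)) :=
    mul_le_mul hb400 hq (sq_nonneg _) (by positivity)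
  have hRR : 400*A^8 * (1/(16*A^10)) = 25/A^2 := by field_simp; ring
  rw [hRR] at hR
  have h25 : 25/A^2 ≤ 25 := by
    rw [div_le_iff₀ (by positivity)]
    nlinarith [one_le_pow₀ hA (n := 2)]
  nlinarith [hL, hd2, hR, h25, one_le_pow₀ hA (n := 12)]

open Polynomial in
theorem P4a_irreducible (a : ℤ) (ha : 1 ≤ a) :
    Irreducible ((C (20 * a ^ 4 - 2) * X ^ 4 + C (16 * a ^ 5 + 4 * a) * X ^ 3
      + C (16 * a ^ 6 + 4 * a ^ 2) * X ^ 2 + C (8 * a ^ 3) * X + 1).map (Int.castRingHom ℚ)) := by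
  set pI : ℤ[X] := C (20 * a ^ 4 - 2) * X ^ 4 + C (16 * a ^ 5 + 4 * a) * X ^ 3
      + C (16 * a ^ 6 + 4 * a ^ 2) * X ^ 2 + C (8 * a ^ 3) * X + 1 with hpI
  have hlead : 20 * a ^ 4 - 2 ≠ 0 := by nlinarith [one_le_pow₀ ha (n := 4)]
  have h0 : pI.coeff 0 = 1 := by
    rw [hpI]
    simp only [coeff_add, coeff_C_mul, coeff_X_pow, coeff_one, coeff_X]
    norm_num
  have h4 : pI.coeff 4 = 20 * a ^ 4 - 2 := by
    rw [hpI]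
    simp only [coeff_add, coeff_C_mul, coeff_X_pow, coeff_one, coeff_X]
    norm_num
  have hdeg : pI.natDegree = 4 := by
    rw [hpI]; compute_degree!
  have hP0 : pI ≠ 0 := fun h => by simp [h] at h0
  have hprim : pI.IsPrimitive := by
    intro r hr
    rw [C_dvd_iff_dvd_coeff] at hr
    have := hr 0
    rw [h0] at this
    exact isUnit_of_dvd_one this
  rw [← Polynomial.IsPrimitive.Int.irreducible_iff_irreducible_map_cast hprim]
  -- real facts
  have hA : (1:ℝ) ≤ (a:ℝ) := by exact_mod_cast ha
  have hA2 : (a:ℝ) = 1 ∨ 2 ≤ (a:ℝ) := by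
    rcases (by omega : a = 1 ∨ 2 ≤ a) with h|h
    · left; rw [h]; norm_num
    · right; exact_mod_cast h
  have heval : ∀ w : ℝ, aeval w pI = (20*(a:ℝ)^4-2)*w^4 + (16*(a:ℝ)^5+4*(a:ℝ))*w^3
      + (16*(a:ℝ)^6+4*(a:ℝ)^2)*w^2 + 8*(a:ℝ)^3*w + 1 := by
    intro w
    rw [hpI]
    simp only [map_add, map_mul, map_pow, aeval_X, aeval_C, map_one, map_ofNat, map_intCast,
      algebraMap_int_eq, eq_intCast]
    push_cast
    ring
  constructor
  · exact not_isUnit_of_natDegree_pos pI (by omega)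
  · intro f g hfg
    by_contra hcon
    push_neg at hcon
    obtain ⟨hfU, hgU⟩ := hcon
    have hf0 : f ≠ 0 := by rintro rfl; rw [zero_mul] at hfg; exact hP0 hfg
    have hg0 : g ≠ 0 := by rintro rfl; rw [mul_zero] at hfg; exact hP0 hfg
    have hsum : f.natDegree + g.natDegree = 4 := by
      rw [← natDegree_mul hf0 hg0, ← hfg, hdeg]
    have hfd : f.natDegree ≠ 0 := by
      intro h
      apply hfU
      rw [eq_C_of_natDegree_eq_zero h]
      apply isUnit_C.mpr
      exact hprim (f.coeff 0) (Dvd.dvd.trans (dvd_of_eq (eq_C_of_natDegree_eq_zero h).symm) ⟨g, hfg⟩)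
    have hgd : g.natDegree ≠ 0 := by
      intro h
      apply hgU
      rw [eq_C_of_natDegree_eq_zero h]
      apply isUnit_C.mpr
      exact hprim (g.coeff 0) (Dvd.dvd.trans (dvd_of_eq (eq_C_of_natDegree_eq_zero h).symm)
        ⟨f, by rw [hfg, mul_comm]⟩)
    have hcoeff0 : f.coeff 0 * g.coeff 0 = 1 := by
      rw [← mul_coeff_zero, ← hfg, h0]
    have hevfg : ∀ w : ℝ, (20*(a:ℝ)^4-2)*w^4 + (16*(a:ℝ)^5+4*(a:ℝ))*w^3
        + (16*(a:ℝ)^6+4*(a:ℝ)^2)*w^2 + 8*(a:ℝ)^3*w + 1 = aeval w f * aeval w g := by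
      intro w
      rw [← heval w, hfg, map_mul]
    -- helper: linear factor kill
    have linKill : ∀ p q : ℤ[X], p.natDegree = 1 → p.coeff 0 * q.coeff 0 = 1 → p ≠ 0 →
        (∀ w : ℝ, (20*(a:ℝ)^4-2)*w^4 + (16*(a:ℝ)^5+4*(a:ℝ))*w^3
        + (16*(a:ℝ)^6+4*(a:ℝ)^2)*w^2 + 8*(a:ℝ)^3*w + 1 = aeval w p * aeval w q) → False := by
      intro p q hp1 hpq hp0 hev
      have hb : p.coeff 1 ≠ 0 := by
        have := leadingCoeff_ne_zero.mpr hp0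
        rwa [leadingCoeff, hp1] at this
      have hc : p.coeff 0 = 1 ∨ p.coeff 0 = -1 := by
        rcases Int.mul_eq_one_iff_eq_one_or_neg_one.mp hpq with ⟨h1, _⟩ | ⟨h1, _⟩
        · exact Or.inl h1
        · exact Or.inr h1
      have hbr : ((p.coeff 1 : ℤ):ℝ) ≠ 0 := Int.cast_ne_zero.mpr hb
      have hpe : ∀ w : ℝ, aeval w p = (p.coeff 0 : ℝ) + (p.coeff 1 : ℝ) * w := by
        intro w
        rw [aeval_eq_sum_range' (n := 2) (by omega) w]
        simp [Finset.sum_range_succ]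
      have hroot : aeval (-(p.coeff 0 : ℝ)/(p.coeff 1 : ℝ)) p = 0 := by
        rw [hpe]; field_simp; try ring
      apply noLinear a (p.coeff 1) (p.coeff 0) (a:ℝ) hA rfl hA2 hb hc
      rw [hev, hroot, zero_mul]
    rcases (by omega : f.natDegree = 1 ∨ f.natDegree = 3 ∨ f.natDegree = 2) with h1 | h3 | h2
    · exact linKill f g h1 hcoeff0 hf0 hevfg
    · have hg1 : g.natDegree = 1 := by omega
      exact linKill g f hg1 (by rw [mul_comm] at hcoeff0; exact hcoeff0) hg0
        (fun w => by rw [hevfg w, mul_comm])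
    · -- both quadratic
      have hg2 : g.natDegree = 2 := by omega
      have hα : f.coeff 2 ≠ 0 := by
        have := leadingCoeff_ne_zero.mpr hf0
        rwa [leadingCoeff, h2] at this
      have hγ : g.coeff 2 ≠ 0 := by
        have := leadingCoeff_ne_zero.mpr hg0
        rwa [leadingCoeff, hg2] at this
      have hlc : f.coeff 2 * g.coeff 2 = 20 * a ^ 4 - 2 := by
        have hl := leadingCoeff_mul f g
        rw [← hfg, leadingCoeff, leadingCoeff, leadingCoeff, hdeg, h4, h2, hg2] at hl
        exact hl.symm
      have hfe : ∀ w : ℝ, aeval w f = (f.coeff 0 : ℝ) + (f.coeff 1 : ℝ) * w + (f.coeff 2 : ℝ) * w^2 := by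
        intro w
        rw [aeval_eq_sum_range' (n := 3) (by omega) w]
        simp [Finset.sum_range_succ]
        try ring
      have hge : ∀ w : ℝ, aeval w g = (g.coeff 0 : ℝ) + (g.coeff 1 : ℝ) * w + (g.coeff 2 : ℝ) * w^2 := by
        intro w
        rw [aeval_eq_sum_range' (n := 3) (by omega) w]
        simp [Finset.sum_range_succ]
        try ring
      -- helper: one quadratic factor negative at w₀
      have quadKillOne : ∀ (p q : ℤ[X]) (ε : ℤ), (ε = 1 ∨ ε = -1) → p.coeff 0 = ε →
          p.natDegree = 2 → q.natDegree = 2 → p ≠ 0 → q ≠ 0 → pI = p * q →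
          ((ε:ℝ) * aeval (-16*(a:ℝ)^5/(64*(a:ℝ)^8-8*(a:ℝ)^4+1)) p < 0) → False := by
        intro p q ε hε hc0 hp2 hq2 hp0 hq0 hpq hneg'
        have hεr : (ε:ℝ) = 1 ∨ (ε:ℝ) = -1 := by
          rcases hε with rfl|rfl
          · left; norm_num
          · right; norm_num
        have hε2 : (ε:ℝ)^2 = 1 := by rcases hεr with h|h <;> rw [h] <;> norm_num
        have hpc2 : p.coeff 2 ≠ 0 := by
          have := leadingCoeff_ne_zero.mpr hp0
          rwa [leadingCoeff, hp2] at this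
        have hqc2 : q.coeff 2 ≠ 0 := by
          have := leadingCoeff_ne_zero.mpr hq0
          rwa [leadingCoeff, hq2] at this
        have hlc' : p.coeff 2 * q.coeff 2 = 20 * a ^ 4 - 2 := by
          have hl := leadingCoeff_mul p q
          rw [← hpq, leadingCoeff, leadingCoeff, leadingCoeff, hdeg, h4, hp2, hq2] at hl
          exact hl.symm
        have hpe' : ∀ w : ℝ, aeval w p = (p.coeff 0 : ℝ) + (p.coeff 1 : ℝ) * w + (p.coeff 2 : ℝ) * w^2 := by
          intro w
          rw [aeval_eq_sum_range' (n := 3) (by omega) w]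
          simp [Finset.sum_range_succ]
          try ring
        have hαz : ε * p.coeff 2 ≠ 0 := by
          rcases hε with rfl|rfl <;> simpa using hpc2
        have hbound : ((ε * p.coeff 2 : ℤ):ℝ)^2 ≤ (20*(a:ℝ)^4-2)^2 := by
          have h1 : (ε * p.coeff 2)^2 ≤ (20 * a ^ 4 - 2)^2 := by
            have hq1 : 1 ≤ (q.coeff 2)^2 := by
              rcases lt_or_gt_of_ne hqc2 with h|h <;> nlinarith
            calc (ε * p.coeff 2)^2 = ε^2 * (p.coeff 2)^2 := by ring
              _ ≤ (p.coeff 2)^2 := by rcases hε with rfl|rfl <;> nlinarith [sq_nonneg (p.coeff 2)]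
              _ ≤ (p.coeff 2)^2 * (q.coeff 2)^2 := by nlinarith [sq_nonneg (p.coeff 2)]
              _ = (20 * a ^ 4 - 2)^2 := by rw [← hlc']; ring
          have h2 : (((ε * p.coeff 2)^2 : ℤ) : ℝ) ≤ (((20 * a ^ 4 - 2)^2 : ℤ) : ℝ) :=
            Int.cast_le.mpr h1
          push_cast at h2
          push_cast
          linarith
        apply quadKill (ε * p.coeff 2) (ε * p.coeff 1) (a:ℝ) hA hA2 hαz hbound
        · push_cast
          have := hpe' (-16*(a:ℝ)^5/(64*(a:ℝ)^8-8*(a:ℝ)^4+1))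
          rw [this, hc0] at hneg'
          push_cast at hneg'
          nlinarith [hneg', hε2]
        · intro w hw
          push_cast at hw
          have hpw : aeval w p = 0 := by
            have : (ε:ℝ) * aeval w p = 0 := by
              rw [hpe', hc0]
              push_cast
              nlinarith [hw, hε2]
            rcases mul_eq_zero.mp this with h|h
            · rcases hεr with h'|h' <;> rw [h'] at h <;> norm_num at h
            · exact h
          have : aeval w pI = 0 := by rw [hpq, map_mul, hpw, zero_mul]
          rw [heval w] at this
          exact this
      -- use negativity of P at w₀
      have hPneg := pneg (a:ℝ) hA
      obtain ⟨pt, hpt⟩ : ∃ x:ℝ, x = -16*(a:ℝ)^5/(64*(a:ℝ)^8-8*(a:ℝ)^4+1) := ⟨_, rfl⟩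
      rw [← hpt] at hPneg
      have hPfg := hevfg pt
      rcases Int.mul_eq_one_iff_eq_one_or_neg_one.mp hcoeff0 with ⟨hcf, hcg⟩ | ⟨hcf, hcg⟩
      · rcases lt_trichotomy (aeval pt f) 0 with h|h|h
        · refine quadKillOne f g 1 (Or.inl rfl) hcf h2 hg2 hf0 hg0 hfg ?_
          rw [← hpt]
          push_cast
          linarith
        · rw [h, zero_mul] at hPfg; linarith
        · have hgneg : aeval pt g < 0 := by nlinarith
          refine quadKillOne g f 1 (Or.inl rfl) hcg hg2 h2 hg0 hf0 (by rw [hfg, mul_comm]) ?_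
          rw [← hpt]
          push_cast
          linarith
      · rcases lt_trichotomy (aeval pt f) 0 with h|h|h
        · have hgpos : 0 < aeval pt g := by nlinarith
          refine quadKillOne g f (-1) (Or.inr rfl) hcg hg2 h2 hg0 hf0 (by rw [hfg, mul_comm]) ?_
          rw [← hpt]
          push_cast
          linarith
        · rw [h, zero_mul] at hPfg; linarith
        · refine quadKillOne f g (-1) (Or.inr rfl) hcf h2 hg2 hf0 hg0 hfg ?_
          rw [← hpt]
          push_cast
          linarith
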